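/- Let ψ be a power series with nonnegative coefficients, ψ(0) > 0, positive radius of convergence R, and suppose ψ is not a polynomial of degree ≤ 1 and lim_{t↑R} tψ'(t)/ψ(t) > 1. Let τ ∈ (0,R) be the unique point with τψ'(τ) = ψ(τ). Then the function t ↦ t/ψ(t) is strictly increasing on [0,τ), strictly decreasing on (τ,R), and attains its maximum on [0,R) at t = τ. -/

import Mathlib

/-- For a power series ψ with nonnegative coefficients, ψ(0) > 0,
radius of convergence R, whose mean function m(t) = tψ'(t)/ψ(t) is strictly increasing
with limit > 1, and apex τ ∈ (0,R) with τψ'(τ) = ψ(τ), the map t ↦ t/ψ(t) is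
strictly increasing on [0,τ), strictly decreasing on (τ,R), and maximal at τ. -/
theorem stmt_0 (a : ℕ → ℝ) (ha : ∀ n, 0 ≤ a n) (ha0 : 0 < a 0)
    (R : ℝ) (hR : 0 < R)
    (hsum : ∀ t : ℝ, |t| < R → Summable (fun n => a n * t ^ n))
    (ψ ψ' : ℝ → ℝ)
    (hψ : ∀ t : ℝ, ψ t = ∑' n, a n * t ^ n)
    (hψ' : ∀ t : ℝ, |t| < R → HasDerivAt ψ (ψ' t) t)
    (hnonlin : ∃ j, 2 ≤ j ∧ 0 < a j)
    (m : ℝ → ℝ) (hm : ∀ t, m t = t * ψ' t / ψ t)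
    (hmono : StrictMonoOn m (Set.Ico 0 R))
    (τ : ℝ) (hτ : τ ∈ Set.Ioo 0 R) (hapex : τ * ψ' τ = ψ τ) :
    StrictMonoOn (fun t => t / ψ t) (Set.Ico 0 τ) ∧
    StrictAntiOn (fun t => t / ψ t) (Set.Ioo τ R) ∧
    (∀ t ∈ Set.Ico 0 R, t / ψ t ≤ τ / ψ τ) := by
  obtain ⟨hτ0, hτR⟩ := hτ
  have hpos : ∀ t : ℝ, 0 ≤ t → t < R → 0 < ψ t := by
    intro t ht0 htR
    have habs : |t| < R := by rwa [abs_of_nonneg ht0]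
    have hs := hsum t habs
    have h0 : a 0 * t ^ 0 ≤ ∑' n, a n * t ^ n :=
      Summable.le_tsum hs 0 (fun n _ => mul_nonneg (ha n) (pow_nonneg ht0 n))
    rw [hψ t]
    calc (0:ℝ) < a 0 := ha0
      _ = a 0 * t ^ 0 := by ring
      _ ≤ _ := h0
  have hf : ∀ t : ℝ, 0 ≤ t → t < R →
      HasDerivAt (fun t => t / ψ t) ((ψ t - t * ψ' t) / (ψ t) ^ 2) t := by
    intro t ht0 htR
    have habs : |t| < R := by rwa [abs_of_nonneg ht0]
    have h := (hasDerivAt_id' t).div (hψ' t habs) (hpos t ht0 htR).ne'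
    rw [one_mul] at h; exact h
  have hmτ : m τ = 1 := by
    rw [hm, hapex, div_self (hpos τ hτ0.le hτR).ne']
  -- strict mono on Icc 0 τ
  have hmonoIcc : StrictMonoOn (fun t => t / ψ t) (Set.Icc 0 τ) := by
    apply strictMonoOn_of_deriv_pos (convex_Icc 0 τ)
    · intro t ht
      exact (hf t ht.1 (lt_of_le_of_lt ht.2 hτR)).continuousAt.continuousWithinAt
    · intro t ht
      rw [interior_Icc] at ht
      have htR : t < R := ht.2.trans hτR
      rw [(hf t ht.1.le htR).deriv]
      have hψt := hpos t ht.1.le htR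
      have hmlt : m t < 1 := by
        rw [← hmτ]
        exact hmono ⟨ht.1.le, htR⟩ ⟨hτ0.le, hτR⟩ ht.2
      rw [hm, div_lt_one hψt] at hmlt
      exact div_pos (by linarith) (by positivity)
  -- strict anti on Ico τ R
  have hantiIco : StrictAntiOn (fun t => t / ψ t) (Set.Ico τ R) := by
    apply strictAntiOn_of_deriv_neg (convex_Ico τ R)
    · intro t ht
      exact (hf t (hτ0.le.trans ht.1) ht.2).continuousAt.continuousWithinAt
    · intro t ht
      rw [interior_Ico] at ht
      have ht0 : 0 ≤ t := hτ0.le.trans ht.1.le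
      rw [(hf t ht0 ht.2).deriv]
      have hψt := hpos t ht0 ht.2
      have hmlt : 1 < m t := by
        rw [← hmτ]
        exact hmono ⟨hτ0.le, hτR⟩ ⟨ht0, ht.2⟩ ht.1
      rw [hm, lt_div_iff₀ hψt, one_mul] at hmlt
      apply div_neg_of_neg_of_pos (by linarith) (by positivity)
  refine ⟨hmonoIcc.mono Set.Ico_subset_Icc_self, hantiIco.mono Set.Ioo_subset_Ico_self, ?_⟩
  intro t ht
  rcases lt_trichotomy t τ with h | h | h
  · exact (hmonoIcc ⟨ht.1, h.le⟩ ⟨hτ0.le, le_refl τ⟩ h).le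
  · rw [h]
  · exact (hantiIco ⟨le_refl τ, hτR⟩ ⟨h.le, ht.2⟩ h).le
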